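/- arXiv:1602.02512 — 5 statements merged into one kernel-verified Lean document; each statement's English description precedes it below -/
import Mathlib

section
/- Let U ⊆ ℂ be a nonempty connected open set, let a, b, c : U → ℂ be holomorphic, and let w₁, w₂, w₃, w₄ : U → ℂ be holomorphic solutions of the Riccati equation w′(z) = a(z) + b(z)·w(z) + c(z)·w(z)² that are pairwise distinct at every point of U (i.e. wᵢ(z) ≠ wⱼ(z) for all z ∈ U and all i ≠ j). Then the cross-ratio z ↦ ((w₁(z) − w₃(z))·(w₂(z) − w₄(z))) / ((w₁(z) − w₄(z))·(w₂(z) − w₃(z))) is constant on U. -/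
open Complex

/-- **Cross-ratio of four Riccati solutions is constant.**
If `w₁, w₂, w₃, w₄` are holomorphic solutions on a nonempty connected open set
`U ⊆ ℂ` of the Riccati equation `w′ = a + b·w + c·w²` (with holomorphic
coefficients) which are pairwise distinct at every point of `U`, then their
cross-ratio is constant on `U`. -/
theorem riccati_cross_ratio_constant
    (U : Set ℂ) (hU : IsOpen U) (hUconn : IsConnected U)
    (a b c : ℂ → ℂ)
    (ha : DifferentiableOn ℂ a U) (hb : DifferentiableOn ℂ b U)
    (hc : DifferentiableOn ℂ c U)
    (w₁ w₂ w₃ w₄ : ℂ → ℂ)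
    (hw₁ : DifferentiableOn ℂ w₁ U) (hw₂ : DifferentiableOn ℂ w₂ U)
    (hw₃ : DifferentiableOn ℂ w₃ U) (hw₄ : DifferentiableOn ℂ w₄ U)
    (hode₁ : ∀ z ∈ U, HasDerivAt w₁ (a z + b z * w₁ z + c z * (w₁ z) ^ 2) z)
    (hode₂ : ∀ z ∈ U, HasDerivAt w₂ (a z + b z * w₂ z + c z * (w₂ z) ^ 2) z)
    (hode₃ : ∀ z ∈ U, HasDerivAt w₃ (a z + b z * w₃ z + c z * (w₃ z) ^ 2) z)
    (hode₄ : ∀ z ∈ U, HasDerivAt w₄ (a z + b z * w₄ z + c z * (w₄ z) ^ 2) z)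
    (hdist : ∀ z ∈ U, w₁ z ≠ w₂ z ∧ w₁ z ≠ w₃ z ∧ w₁ z ≠ w₄ z ∧
      w₂ z ≠ w₃ z ∧ w₂ z ≠ w₄ z ∧ w₃ z ≠ w₄ z) :
    ∃ k : ℂ, ∀ z ∈ U,
      ((w₁ z - w₃ z) * (w₂ z - w₄ z)) / ((w₁ z - w₄ z) * (w₂ z - w₃ z)) = k := by
  set R : ℂ → ℂ := fun z =>
    ((w₁ z - w₃ z) * (w₂ z - w₄ z)) / ((w₁ z - w₄ z) * (w₂ z - w₃ z)) with hRdef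
  have hder : ∀ z ∈ U, HasDerivAt R 0 z := by
    intro z hz
    obtain ⟨h12, h13, h14, h23, h24, h34⟩ := hdist z hz
    have d1 := hode₁ z hz
    have d2 := hode₂ z hz
    have d3 := hode₃ z hz
    have d4 := hode₄ z hz
    have hf := (d1.sub d3).mul (d2.sub d4)
    have hg := (d1.sub d4).mul (d2.sub d3)
    have hgne : (w₁ z - w₄ z) * (w₂ z - w₃ z) ≠ 0 :=
      mul_ne_zero (sub_ne_zero.2 h14) (sub_ne_zero.2 h23)
    have := hf.div hg hgne
    refine this.congr_deriv (Eq.symm ?_)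
    rw [eq_comm, div_eq_zero_iff]
    left
    simp only [Pi.mul_apply, Pi.sub_apply]
    ring
  obtain ⟨z₀, hz₀⟩ := hUconn.nonempty
  refine ⟨R z₀, ?_⟩
  have hloc : IsLocallyConstant (fun p : U => R p.1) := by
    rw [IsLocallyConstant.iff_exists_open]
    rintro ⟨x, hx⟩
    obtain ⟨r, hr, hball⟩ := Metric.isOpen_iff.1 hU x hx
    refine ⟨Subtype.val ⁻¹' Metric.ball x r,
      Metric.isOpen_ball.preimage continuous_subtype_val,
      by simpa using hr, ?_⟩
    rintro ⟨y, hy⟩ hy'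
    have hconv : Convex ℝ (Metric.ball x r) := convex_ball x r
    have hdiff : DifferentiableOn ℂ R (Metric.ball x r) := fun p hp =>
      ((hder p (hball hp)).differentiableAt).differentiableWithinAt
    have hzero : ∀ p ∈ Metric.ball x r, fderivWithin ℂ R (Metric.ball x r) p = 0 := by
      intro p hp
      rw [fderivWithin_eq_fderiv (Metric.isOpen_ball.uniqueDiffWithinAt hp)
        ((hder p (hball hp)).differentiableAt)]
      rw [(hder p (hball hp)).hasFDerivAt.fderiv]
      ext v
      simp
    exact hconv.is_const_of_fderivWithin_eq_zero hdiff hzero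
      (by simpa using hy') (Metric.mem_ball_self hr)
  intro z hz
  haveI : PreconnectedSpace U := Subtype.preconnectedSpace hUconn.isPreconnected
  exact hloc.apply_eq_of_isPreconnected isPreconnected_univ
    (x := ⟨z, hz⟩) (y := ⟨z₀, hz₀⟩) trivial trivial
end

section
/- Let U ⊆ ℂ be a nonempty connected open set, let a, b, c : U → ℂ be holomorphic, and let φ₁, φ₂, φ₃ : U → ℂ be holomorphic solutions of the Riccati equation w′ = a(z) + b(z)w + c(z)w² that are pairwise distinct at every point of U and are each algebraic over ℂ(z), i.e. for each i there is a nonzero polynomial Qᵢ ∈ ℂ[z, y] with Qᵢ(z, φᵢ(z)) = 0 for all z ∈ U. Then every holomorphic solution t : U → ℂ of the same equation with t(z) ∉ {φ₁(z), φ₂(z), φ₃(z)} for all z ∈ U is also algebraic over ℂ(z), i.e. there is a nonzero polynomial Q ∈ ℂ[z, y] with Q(z, t(z)) = 0 for all z ∈ U. -/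
open Complex

/-- A function `f` on `U` is algebraic over `ℂ(z)` if some nonzero two-variable
polynomial `Q ∈ ℂ[z, y]` satisfies `Q(z, f z) = 0` on `U`. -/
def IsAlgebraicOverRatFns (U : Set ℂ) (f : ℂ → ℂ) : Prop :=
  ∃ Q : MvPolynomial (Fin 2) ℂ, Q ≠ 0 ∧
    ∀ z ∈ U, MvPolynomial.eval ![z, f z] Q = 0

open Polynomial
open scoped nonZeroDivisors


lemma riccati_aux_const {U : Set ℂ} (hU : IsOpen U) (hUc : IsPreconnected U)
    {f : ℂ → ℂ} (hf : ∀ z ∈ U, HasDerivAt f 0 z) {x y : ℂ} (hx : x ∈ U) (hy : y ∈ U) :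
    f x = f y := by
  haveI : PreconnectedSpace U := Subtype.preconnectedSpace hUc
  have hloc : IsLocallyConstant (fun p : U => f p) := by
    rw [IsLocallyConstant.iff_eventually_eq]
    intro p
    obtain ⟨r, hr0, hball⟩ := Metric.isOpen_iff.1 hU p p.2
    have hcst : ∀ w ∈ Metric.ball (p : ℂ) r, f w = f p := by
      intro w hw
      refine (convex_ball (p : ℂ) r).is_const_of_fderivWithin_eq_zero (𝕜 := ℂ)
        (fun z hz => ((hf z (hball hz)).differentiableAt).differentiableWithinAt) ?_ hw
        (Metric.mem_ball_self hr0)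
      intro z hz
      rw [fderivWithin_of_isOpen Metric.isOpen_ball hz,
        (hf z (hball hz)).hasFDerivAt.fderiv]
      ext v
      simp
    have hmem : (fun q : U => (q : ℂ)) ⁻¹' Metric.ball (p : ℂ) r ∈ nhds p :=
      (continuous_subtype_val.continuousAt).preimage_mem_nhds (Metric.ball_mem_nhds _ hr0)
    exact Filter.eventually_of_mem hmem fun q hq => hcst q hq
  exact hloc.apply_eq_of_preconnectedSpace ⟨x, hx⟩ ⟨y, hy⟩

lemma riccati_aux_infinite {U : Set ℂ} (hU : IsOpen U) (hne : U.Nonempty) : U.Infinite := by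
  obtain ⟨z₀, hz₀⟩ := hne
  obtain ⟨r, hr0, hball⟩ := Metric.isOpen_iff.1 hU z₀ hz₀
  apply Set.Infinite.mono (Set.image_subset_iff.2 (fun n _ => hball ?_) :
      (fun n : ℕ => z₀ + (r / (n + 2) : ℝ)) '' Set.univ ⊆ U)
  · apply Set.Infinite.image ?_ Set.infinite_univ
    intro m _ n _ h
    simp only [add_right_inj, Complex.ofReal_inj] at h
    have h2 : ((m : ℝ) + 2)⁻¹ = ((n : ℝ) + 2)⁻¹ := by
      have hm : (r * ((m:ℝ)+2)⁻¹) = r * ((n:ℝ)+2)⁻¹ := by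
        rw [← div_eq_mul_inv, ← div_eq_mul_inv]; exact h
      exact mul_left_cancel₀ (ne_of_gt hr0) hm
    have h3 : (m : ℝ) + 2 = (n : ℝ) + 2 := inv_injective h2
    have : (m : ℝ) = n := by linarith
    exact_mod_cast this
  · simp only [Metric.mem_ball, dist_eq, add_sub_cancel_left]
    rw [Complex.norm_real, Real.norm_eq_abs, abs_of_pos (by positivity)]
    rw [div_lt_iff₀ (by positivity)]
    nlinarith [hr0]


noncomputable def holA (U : Set ℂ) : Subalgebra ℂ (U → ℂ) where
  carrier := {g | ∃ f : ℂ → ℂ, AnalyticOnNhd ℂ f U ∧ ∀ z : U, g z = f z}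
  mul_mem' := by
    rintro g₁ g₂ ⟨f₁, hf₁, he₁⟩ ⟨f₂, hf₂, he₂⟩
    exact ⟨f₁ * f₂, hf₁.mul hf₂, fun z => by simp [Pi.mul_apply, he₁ z, he₂ z]⟩
  add_mem' := by
    rintro g₁ g₂ ⟨f₁, hf₁, he₁⟩ ⟨f₂, hf₂, he₂⟩
    exact ⟨f₁ + f₂, hf₁.add hf₂, fun z => by simp [Pi.add_apply, he₁ z, he₂ z]⟩
  algebraMap_mem' := fun c =>
    ⟨fun _ => c, analyticOnNhd_const, fun z => rfl⟩

namespace holA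

variable {U : Set ℂ}

/-- evaluation at a point of `U`, as an algebra hom -/
noncomputable def ev (w : U) : holA U →ₐ[ℂ] ℂ :=
  (Pi.evalAlgHom ℂ (fun _ : U => ℂ) w).comp (holA U).val

@[simp] lemma ev_apply (w : U) (g : holA U) : ev w g = (g : U → ℂ) w := rfl

lemma ext_iff' {g₁ g₂ : holA U} : g₁ = g₂ ↔ ∀ w : U, ev w g₁ = ev w g₂ := by
  constructor
  · rintro rfl w; rfl
  · intro h
    ext w
    exact h w

/-- the element of `holA U` given by an analytic function -/
noncomputable def ofFun (f : ℂ → ℂ) (hf : AnalyticOnNhd ℂ f U) : holA U :=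
  ⟨fun z : U => f z, ⟨f, hf, fun _ => rfl⟩⟩

@[simp] lemma ev_ofFun (f : ℂ → ℂ) (hf : AnalyticOnNhd ℂ f U) (w : U) :
    ev w (ofFun f hf) = f w := rfl

lemma isDomain (hU : IsOpen U) (hUc : IsPreconnected U) (hne : U.Nonempty) :
    IsDomain (holA U) := by
  haveI : Nontrivial (holA U) := by
    refine ⟨1, 0, fun h => ?_⟩
    obtain ⟨z₀, hz₀⟩ := hne
    have := congrArg (ev ⟨z₀, hz₀⟩) h
    simpa using this
  haveI : NoZeroDivisors (holA U) := by
    refine ⟨fun {g₁ g₂} h => ?_⟩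
    by_cases h1 : g₁ = 0
    · exact Or.inl h1
    right
    obtain ⟨f₁, hf₁, he₁⟩ := g₁.2
    obtain ⟨f₂, hf₂, he₂⟩ := g₂.2
    obtain ⟨w, hw⟩ : ∃ w : U, (g₁ : U → ℂ) w ≠ 0 := by
      by_contra hc
      push_neg at hc
      exact h1 (by ext w; exact hc w)
    have hfw : f₁ w ≠ 0 := by rw [← he₁ w]; exact hw
    have hprod : ∀ z ∈ U, f₁ z * f₂ z = 0 := by
      intro z hz
      have := congrArg (ev ⟨z, hz⟩) h
      simpa [ev_apply, he₁ ⟨z, hz⟩, he₂ ⟨z, hz⟩] using this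
    have hev : f₂ =ᶠ[nhds (w : ℂ)] 0 := by
      have h₁ : ∀ᶠ z in nhds (w : ℂ), f₁ z ≠ 0 :=
        ((hf₁ w w.2).continuousAt).eventually_ne hfw
      have h₂ : ∀ᶠ z in nhds (w : ℂ), z ∈ U := hU.mem_nhds w.2
      filter_upwards [h₁, h₂] with z hz1 hz2
      have := hprod z hz2
      exact (mul_eq_zero.1 this).resolve_left hz1
    have hzero : Set.EqOn f₂ 0 U :=
      hf₂.eqOn_zero_of_preconnected_of_eventuallyEq_zero hUc w.2 hev
    ext z
    simpa [he₂ z] using hzero z.2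
  exact NoZeroDivisors.to_isDomain _

end holA


/-- `MvPolynomial (Fin 2) ℂ ≃ ℂ[X][Y]`, where the outer (`Y`) variable corresponds to
the second `Mv` variable. -/
noncomputable def riccatiEquiv : MvPolynomial (Fin 2) ℂ ≃ₐ[ℂ] Polynomial (Polynomial ℂ) :=
  (MvPolynomial.renameEquiv ℂ (Equiv.swap (0 : Fin 2) 1)).trans
    ((MvPolynomial.finSuccEquiv ℂ 1).trans
      (Polynomial.mapAlgEquiv
        ((MvPolynomial.finSuccEquiv ℂ 0).trans
          (Polynomial.mapAlgEquiv (MvPolynomial.isEmptyAlgEquiv ℂ (Fin 0))))))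

lemma riccatiEquiv_eval (Q : MvPolynomial (Fin 2) ℂ) (w u : ℂ) :
    MvPolynomial.eval ![w, u] Q =
      Polynomial.eval u ((riccatiEquiv Q).map (Polynomial.evalRingHom w)) := by
  induction Q using MvPolynomial.induction_on with
  | C r =>
    simp [riccatiEquiv, MvPolynomial.finSuccEquiv_apply]
    exact (MvPolynomial.coeff_zero_C (σ := Fin 0) r).symm
  | add p q hp hq => simp [map_add, hp, hq]
  | mul_X p i hp =>
    rw [map_mul, map_mul, Polynomial.map_mul, Polynomial.eval_mul, hp]
    congr 1
    fin_cases i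
    · simp [riccatiEquiv, Equiv.swap_apply_left, MvPolynomial.finSuccEquiv_X_succ,
        MvPolynomial.rename_X]
      rw [show (MvPolynomial.X 1 : MvPolynomial (Fin 2) ℂ) = MvPolynomial.X (Fin.succ 0) from rfl,
        MvPolynomial.finSuccEquiv_X_succ]
      simp [MvPolynomial.finSuccEquiv_X_zero]
    · simp [riccatiEquiv, Equiv.swap_apply_right, MvPolynomial.finSuccEquiv_X_zero,
        MvPolynomial.rename_X]

set_option synthInstance.maxHeartbeats 1000000 in
set_option maxHeartbeats 1000000 in
theorem riccati_aux_alg (U : Set ℂ) (hU : IsOpen U) (hUc : IsPreconnected U) (hne : U.Nonempty)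
    (φ₁ φ₂ φ₃ t : ℂ → ℂ)
    (h1 : AnalyticOnNhd ℂ φ₁ U) (h2 : AnalyticOnNhd ℂ φ₂ U) (h3 : AnalyticOnNhd ℂ φ₃ U)
    (hta : AnalyticOnNhd ℂ t U)
    (k : ℂ)
    (hrel : ∀ z ∈ U, t z * ((φ₃ z - φ₂ z) - k * (φ₃ z - φ₁ z)) =
      φ₁ z * (φ₃ z - φ₂ z) - k * (φ₂ z * (φ₃ z - φ₁ z)))
    (hDne : ∀ z ∈ U, (φ₃ z - φ₂ z) - k * (φ₃ z - φ₁ z) ≠ 0)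
    (halg₁ : IsAlgebraicOverRatFns U φ₁) (halg₂ : IsAlgebraicOverRatFns U φ₂)
    (halg₃ : IsAlgebraicOverRatFns U φ₃) :
    IsAlgebraicOverRatFns U t := by
  haveI hdom : IsDomain (holA U) := holA.isDomain hU hUc hne
  set A := holA U with hA
  let F := FractionRing A
  let R := Polynomial ℂ
  let K := FractionRing R
  -- the identity function as an element of A
  have hid : AnalyticOnNhd ℂ (fun z : ℂ => z) U :=
    (differentiable_id.differentiableOn).analyticOnNhd hU
  let zA : A := holA.ofFun (fun z => z) hid
  let ρ : R →+* A := (Polynomial.aeval zA).toRingHom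
  have hρev : ∀ (p : R) (w : U), holA.ev w (ρ p) = p.eval (w : ℂ) := by
    intro p w
    have h1' : holA.ev w (Polynomial.aeval zA p) = Polynomial.aeval (holA.ev w zA) p :=
      (Polynomial.aeval_algHom_apply (holA.ev w) zA p).symm
    have h2' : holA.ev w zA = (w : ℂ) := holA.ev_ofFun _ hid w
    rw [show holA.ev w (ρ p) = holA.ev w (Polynomial.aeval zA p) from rfl, h1', h2']
    exact congrFun (Polynomial.coe_aeval_eq_eval _) p
  have hρinj : Function.Injective ρ := by
    intro p q h
    have hpq : ∀ z ∈ U, (p - q).eval z = 0 := by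
      intro z hz
      have := congrArg (holA.ev ⟨z, hz⟩) h
      rw [hρev, hρev] at this
      rw [Polynomial.eval_sub, this, sub_self]
    have : p - q = 0 :=
      Polynomial.eq_zero_of_infinite_isRoot _ ((riccati_aux_infinite hU hne).mono
        (fun z hz => hpq z hz))
    exact sub_eq_zero.1 this
  -- embedding into the fraction field
  let ι : ↥A →+* F := algebraMap ↥A F
  have hιinj : Function.Injective ι := IsFractionRing.injective ↥A F
  let ρF : R →+* F := ι.comp ρ
  have hρFinj : Function.Injective ρF := hιinj.comp hρinj
  letI : Algebra K F := (IsFractionRing.lift (g := ρF) hρFinj).toAlgebra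
  have halgmap : ∀ p : R, algebraMap K F (algebraMap R K p) = ρF p := fun p =>
    IsFractionRing.lift_algebraMap hρFinj p
  have hcomp : (algebraMap K F).comp (algebraMap R K) = ρF := RingHom.ext halgmap
  have key1 : ∀ (x : F) (P : Polynomial R), P ≠ 0 → Polynomial.eval₂ ρF x P = 0 →
      IsAlgebraic K x := by
    intro x P hP h0
    refine ⟨P.map (algebraMap R K), ?_, ?_⟩
    · exact (Polynomial.map_ne_zero_iff (IsFractionRing.injective R K)).2 hP
    · rw [Polynomial.aeval_def, Polynomial.eval₂_map, hcomp]
      exact h0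
  have key2 : ∀ x : F, IsAlgebraic K x →
      ∃ P : Polynomial R, P ≠ 0 ∧ Polynomial.eval₂ ρF x P = 0 := by
    rintro x ⟨p, hp, hpx⟩
    refine ⟨IsLocalization.integerNormalization R⁰ p, ?_, ?_⟩
    · rw [Ne, IsFractionRing.integerNormalization_eq_zero_iff (A := R)]
      exact hp
    · have hx : Polynomial.eval₂ (algebraMap K F) x p = 0 := by
        rwa [Polynomial.aeval_def] at hpx
      have := IsLocalization.integerNormalization_eval₂_eq_zero (M := R⁰)
        (algebraMap K F) p hx
      rwa [hcomp] at this
  -- pointwise evaluation of eval₂ into A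
  have hcompev : ∀ w : U, ((holA.ev w).toRingHom.comp ρ) = Polynomial.evalRingHom (w : ℂ) := by
    intro w
    refine RingHom.ext fun p => ?_
    rw [RingHom.comp_apply]
    exact hρev p w
  have hevA : ∀ (P : Polynomial R) (g : ↥A) (w : U),
      holA.ev w (Polynomial.eval₂ ρ g P) =
        Polynomial.eval₂ (Polynomial.evalRingHom (w : ℂ)) (holA.ev w g) P := by
    intro P g w
    have hh := Polynomial.hom_eval₂ P ρ (holA.ev w).toRingHom g
    rw [hcompev w] at hh
    exact hh
  -- elements of F algebraic over K coming from algebraic analytic functions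
  have keyφ : ∀ (f : ℂ → ℂ) (hf : AnalyticOnNhd ℂ f U), IsAlgebraicOverRatFns U f →
      IsAlgebraic K (ι (holA.ofFun f hf)) := by
    rintro f hf ⟨Q, hQ, hQ0⟩
    set P : Polynomial R := riccatiEquiv Q with hP
    have hPne : P ≠ 0 := by
      intro h
      exact hQ (by simpa using riccatiEquiv.injective (h.trans (map_zero _).symm))
    have hPA : Polynomial.eval₂ ρ (holA.ofFun f hf) P = 0 := by
      rw [holA.ext_iff']
      intro w
      rw [map_zero, hevA, holA.ev_ofFun]
      rw [Polynomial.eval₂_eq_eval_map, ← riccatiEquiv_eval]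
      exact hQ0 (w : ℂ) w.2
    refine key1 _ P hPne ?_
    have := Polynomial.hom_eval₂ P ρ ι (holA.ofFun f hf)
    rw [show ρF = ι.comp ρ from rfl, ← this, hPA, map_zero]
  -- the four functions as elements of A
  let g1 := holA.ofFun φ₁ h1
  let g2 := holA.ofFun φ₂ h2
  let g3 := holA.ofFun φ₃ h3
  let gt := holA.ofFun t hta
  let kA : ↥A := algebraMap ℂ ↥A k
  have hevk : ∀ w : U, holA.ev w kA = k := fun w => (holA.ev w).commutes k
  let DA : ↥A := (g3 - g2) - kA * (g3 - g1)
  let NA : ↥A := g1 * (g3 - g2) - kA * (g2 * (g3 - g1))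
  have hgtDA : gt * DA = NA := by
    rw [holA.ext_iff']
    intro w
    simp only [DA, NA, gt, g1, g2, g3, map_mul, map_sub, hevk w, holA.ev_ofFun]
    exact hrel w w.2
  have hDA0 : DA ≠ 0 := by
    obtain ⟨z₀, hz₀⟩ := hne
    intro h
    apply hDne z₀ hz₀
    have h' := congrArg (holA.ev ⟨z₀, hz₀⟩) h
    simpa only [DA, g1, g2, g3, map_sub, map_mul, hevk, holA.ev_ofFun, map_zero] using h'
  have hιDA0 : ι DA ≠ 0 := fun h => hDA0 (hιinj (h.trans (map_zero ι).symm))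
  have hT : ι gt = ι NA * (ι DA)⁻¹ := by
    rw [eq_mul_inv_iff_mul_eq₀ hιDA0, ← map_mul, hgtDA]
  have halgk : IsAlgebraic K (ι kA) := by
    have hk' : ι kA = algebraMap K F (algebraMap R K (Polynomial.C k)) := by
      rw [halgmap]
      show ι kA = ι (ρ (Polynomial.C k))
      congr 1
      show kA = Polynomial.aeval zA (Polynomial.C k)
      rw [Polynomial.aeval_C]
    rw [hk']
    exact isAlgebraic_algebraMap _
  have toInt : ∀ x : F, IsAlgebraic K x → IsIntegral K x := fun x h =>
    isAlgebraic_iff_isIntegral.1 h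
  have i1 := toInt _ (keyφ φ₁ h1 halg₁)
  have i2 := toInt _ (keyφ φ₂ h2 halg₂)
  have i3 := toInt _ (keyφ φ₃ h3 halg₃)
  have ik := toInt _ halgk
  have hDAdecomp : ι DA = (ι g3 - ι g2) - ι kA * (ι g3 - ι g1) := by
    simp only [DA, map_sub, map_mul]
  have hNAdecomp : ι NA = ι g1 * (ι g3 - ι g2) - ι kA * (ι g2 * (ι g3 - ι g1)) := by
    simp only [NA, map_sub, map_mul]
  have iD : IsIntegral K (ι DA) := by
    rw [hDAdecomp]; exact (i3.sub i2).sub (ik.mul (i3.sub i1))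
  have iN : IsIntegral K (ι NA) := by
    rw [hNAdecomp]; exact (i1.mul (i3.sub i2)).sub (ik.mul (i2.mul (i3.sub i1)))
  have aT : IsAlgebraic K (ι gt) := by
    rw [hT]
    exact isAlgebraic_iff_isIntegral.2
      (iN.mul (toInt _ ((isAlgebraic_iff_isIntegral.2 iD).inv)))
  -- extract the polynomial relation for t
  obtain ⟨P, hPne, hP0⟩ := key2 _ aT
  have hPA : Polynomial.eval₂ ρ gt P = 0 := by
    apply hιinj
    rw [map_zero]
    have := Polynomial.hom_eval₂ P ρ ι gt
    rw [← this] at hP0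
    exact hP0
  refine ⟨riccatiEquiv.symm P, ?_, ?_⟩
  · intro h
    exact hPne (by simpa using congrArg riccatiEquiv h)
  · intro z hz
    rw [riccatiEquiv_eval, AlgEquiv.apply_symm_apply, ← Polynomial.eval₂_eq_eval_map]
    have := hevA P gt ⟨z, hz⟩
    rw [hPA, map_zero, holA.ev_ofFun] at this
    exact this.symm

/-- If a Riccati equation `w′ = a + b·w + c·w²` on a nonempty connected open set
`U ⊆ ℂ` has three holomorphic solutions `φ₁, φ₂, φ₃`, pairwise distinct at every
point of `U`, which are algebraic over `ℂ(z)`, then every holomorphic solution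
`t` with `t(z) ∉ {φ₁(z), φ₂(z), φ₃(z)}` on `U` is also algebraic over `ℂ(z)`. -/
theorem riccati_three_algebraic_solutions_forces_algebraic
    (U : Set ℂ) (hU : IsOpen U) (hUconn : IsConnected U)
    (a b c : ℂ → ℂ)
    (ha : DifferentiableOn ℂ a U) (hb : DifferentiableOn ℂ b U)
    (hc : DifferentiableOn ℂ c U)
    (φ₁ φ₂ φ₃ : ℂ → ℂ)
    (hφ₁ : DifferentiableOn ℂ φ₁ U) (hφ₂ : DifferentiableOn ℂ φ₂ U)
    (hφ₃ : DifferentiableOn ℂ φ₃ U)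
    (hode₁ : ∀ z ∈ U, HasDerivAt φ₁ (a z + b z * φ₁ z + c z * (φ₁ z) ^ 2) z)
    (hode₂ : ∀ z ∈ U, HasDerivAt φ₂ (a z + b z * φ₂ z + c z * (φ₂ z) ^ 2) z)
    (hode₃ : ∀ z ∈ U, HasDerivAt φ₃ (a z + b z * φ₃ z + c z * (φ₃ z) ^ 2) z)
    (hdist : ∀ z ∈ U, φ₁ z ≠ φ₂ z ∧ φ₁ z ≠ φ₃ z ∧ φ₂ z ≠ φ₃ z)
    (halg₁ : IsAlgebraicOverRatFns U φ₁) (halg₂ : IsAlgebraicOverRatFns U φ₂)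
    (halg₃ : IsAlgebraicOverRatFns U φ₃)
    (t : ℂ → ℂ) (ht : DifferentiableOn ℂ t U)
    (hodet : ∀ z ∈ U, HasDerivAt t (a z + b z * t z + c z * (t z) ^ 2) z)
    (htdist : ∀ z ∈ U, t z ≠ φ₁ z ∧ t z ≠ φ₂ z ∧ t z ≠ φ₃ z) :
    IsAlgebraicOverRatFns U t := by
  obtain ⟨z₀, hz₀⟩ := hUconn.nonempty
  have hUc : IsPreconnected U := hUconn.isPreconnected
  have ha1 : AnalyticOnNhd ℂ φ₁ U := hφ₁.analyticOnNhd hU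
  have ha2 : AnalyticOnNhd ℂ φ₂ U := hφ₂.analyticOnNhd hU
  have ha3 : AnalyticOnNhd ℂ φ₃ U := hφ₃.analyticOnNhd hU
  have hat : AnalyticOnNhd ℂ t U := ht.analyticOnNhd hU
  -- the cross ratio
  set X : ℂ → ℂ := fun z =>
    ((t z - φ₁ z) * (φ₃ z - φ₂ z)) / ((t z - φ₂ z) * (φ₃ z - φ₁ z)) with hXdef
  have hden : ∀ z ∈ U, (t z - φ₂ z) * (φ₃ z - φ₁ z) ≠ 0 := fun z hz =>
    mul_ne_zero (sub_ne_zero.2 (htdist z hz).2.1)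
      (sub_ne_zero.2 (Ne.symm (hdist z hz).2.1))
  have hXderiv : ∀ z ∈ U, HasDerivAt X 0 z := by
    intro z hz
    have h1' := hode₁ z hz
    have h2' := hode₂ z hz
    have h3' := hode₃ z hz
    have ht' := hodet z hz
    have hnum : HasDerivAt (fun w => (t w - φ₁ w) * (φ₃ w - φ₂ w))
        (((a z + b z * t z + c z * (t z) ^ 2) - (a z + b z * φ₁ z + c z * (φ₁ z) ^ 2)) *
          (φ₃ z - φ₂ z) +
        (t z - φ₁ z) *
          ((a z + b z * φ₃ z + c z * (φ₃ z) ^ 2) - (a z + b z * φ₂ z + c z * (φ₂ z) ^ 2))) z :=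
      (ht'.sub h1').mul (h3'.sub h2')
    have hdenD : HasDerivAt (fun w => (t w - φ₂ w) * (φ₃ w - φ₁ w))
        (((a z + b z * t z + c z * (t z) ^ 2) - (a z + b z * φ₂ z + c z * (φ₂ z) ^ 2)) *
          (φ₃ z - φ₁ z) +
        (t z - φ₂ z) *
          ((a z + b z * φ₃ z + c z * (φ₃ z) ^ 2) - (a z + b z * φ₁ z + c z * (φ₁ z) ^ 2))) z :=
      (ht'.sub h2').mul (h3'.sub h1')
    have h := hnum.div hdenD (hden z hz)
    refine h.congr_deriv ?_
    rw [_root_.div_eq_zero_iff]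
    left
    ring
  have hXconst : ∀ z ∈ U, X z = X z₀ := fun z hz =>
    riccati_aux_const hU hUc hXderiv hz hz₀
  set k : ℂ := X z₀ with hkdef
  have hk0 : k ≠ 0 := by
    have : ((t z₀ - φ₁ z₀) * (φ₃ z₀ - φ₂ z₀)) / ((t z₀ - φ₂ z₀) * (φ₃ z₀ - φ₁ z₀)) ≠ 0 :=
      div_ne_zero
        (mul_ne_zero (sub_ne_zero.2 (htdist z₀ hz₀).1)
          (sub_ne_zero.2 (Ne.symm (hdist z₀ hz₀).2.2)))
        (hden z₀ hz₀)
    exact this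
  have hcr : ∀ z ∈ U,
      (t z - φ₁ z) * (φ₃ z - φ₂ z) = k * ((t z - φ₂ z) * (φ₃ z - φ₁ z)) := by
    intro z hz
    have h : ((t z - φ₁ z) * (φ₃ z - φ₂ z)) / ((t z - φ₂ z) * (φ₃ z - φ₁ z)) = k :=
      hXconst z hz
    exact (div_eq_iff (hden z hz)).1 h
  have hrel : ∀ z ∈ U, t z * ((φ₃ z - φ₂ z) - k * (φ₃ z - φ₁ z)) =
      φ₁ z * (φ₃ z - φ₂ z) - k * (φ₂ z * (φ₃ z - φ₁ z)) := by
    intro z hz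
    linear_combination hcr z hz
  have hDne : ∀ z ∈ U, (φ₃ z - φ₂ z) - k * (φ₃ z - φ₁ z) ≠ 0 := by
    intro z hz h0
    have heq : φ₃ z - φ₂ z = k * (φ₃ z - φ₁ z) := by linear_combination h0
    have key : k * ((φ₃ z - φ₁ z) * (φ₂ z - φ₁ z)) = 0 := by
      linear_combination hcr z hz - (t z - φ₁ z) * heq
    rcases mul_eq_zero.1 key with h | h
    · exact hk0 h
    rcases mul_eq_zero.1 h with h | h
    · exact Ne.symm (hdist z hz).2.1 (sub_eq_zero.1 h)
    · exact Ne.symm (hdist z hz).1 (sub_eq_zero.1 h)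
  exact riccati_aux_alg U hU hUc ⟨z₀, hz₀⟩ φ₁ φ₂ φ₃ t ha1 ha2 ha3 hat k hrel hDne
    halg₁ halg₂ halg₃
end

section
/- Let D ⊆ ℂ be an open disc centred at p, let P : D → ℂ be holomorphic, and let t be holomorphic on D ∖ {p} and meromorphic at p with a pole at p, satisfying t′(z) = P(z) − t(z)² for all z ∈ D ∖ {p}. Then the pole of t at p is simple with residue 1; that is, the function z ↦ t(z) − 1/(z − p) extends holomorphically to all of D. -/
open Complex Metric
open Filter Set Function
open scoped Topology

/-- **Poles of solutions of `t′ = P(z) − t²` are simple with residue 1.**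
If `t` is holomorphic on a punctured disc `D ∖ {p}`, has a pole at `p`
(i.e. `|t(z)| → ∞` as `z → p`), and solves `t′ = P(z) − t²` there with `P`
holomorphic on `D`, then `t(z) − 1/(z − p)` extends holomorphically to `D`. -/
theorem riccati_pole_simple_residue_one
    (p : ℂ) (R : ℝ) (hR : 0 < R)
    (P : ℂ → ℂ) (hP : DifferentiableOn ℂ P (ball p R))
    (t : ℂ → ℂ)
    (ht : DifferentiableOn ℂ t (ball p R \ {p}))
    (hpole : Filter.Tendsto (fun z => ‖t z‖) (nhdsWithin p {p}ᶜ)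
      Filter.atTop)
    (hode : ∀ z ∈ ball p R \ {p}, HasDerivAt t (P z - (t z) ^ 2) z) :
    ∃ g : ℂ → ℂ, DifferentiableOn ℂ g (ball p R) ∧
      ∀ z ∈ ball p R \ {p}, t z = 1 / (z - p) + g z := by
  -- choose a small radius where |t| ≥ 1
  have h1 := hpole.eventually_ge_atTop 1
  rw [Filter.eventually_iff, Metric.mem_nhdsWithin_iff] at h1
  obtain ⟨ε, hε, hsub⟩ := h1
  set r := min ε R with hr_def
  have hr : 0 < r := lt_min hε hR
  have hball : ball p r ⊆ ball p R := ball_subset_ball (min_le_right _ _)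
  have htne : ∀ z ∈ ball p r \ {p}, t z ≠ 0 := by
    intro z hz h0
    have : 1 ≤ ‖t z‖ :=
      hsub ⟨ball_subset_ball (min_le_left _ _) hz.1, hz.2⟩
    rw [h0, norm_zero] at this; linarith
  -- u = 1/t tends to 0 at p
  set u : ℂ → ℂ := fun z => (t z)⁻¹ with hu_def
  have hu0 : Tendsto u (𝓝[≠] p) (𝓝 0) := by
    rw [tendsto_zero_iff_norm_tendsto_zero]
    simpa [hu_def, map_inv₀, Pi.inv_def] using hpole.inv_tendsto_atTop
  set U : ℂ → ℂ := Function.update u p 0 with hU_def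
  have hUeq : ∀ z, z ≠ p → U z = (t z)⁻¹ := fun z hz => Function.update_of_ne hz _ _
  have hUp : U p = 0 := Function.update_self _ _ _
  have hmem : ball p r ∈ 𝓝 p := ball_mem_nhds _ hr
  -- derivative of U on the punctured ball
  have hUder : ∀ z ∈ ball p r \ {p}, HasDerivAt U (-(P z - t z ^ 2) / t z ^ 2) z := by
    intro z hz
    have hz' : z ∈ ball p R \ {p} := ⟨hball hz.1, hz.2⟩
    have h := (hode z hz').inv (htne z hz)
    apply h.congr_of_eventuallyEq
    filter_upwards [isOpen_ne.mem_nhds hz.2] with w hw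
    exact hUeq w hw
  -- U is differentiable on the whole small ball
  have hU : DifferentiableOn ℂ U (ball p r) := by
    rw [← differentiableOn_compl_singleton_and_continuousAt_iff hmem]
    refine ⟨fun z hz => ((hUder z hz).differentiableAt).differentiableWithinAt, ?_⟩
    rw [hU_def]
    exact continuousAt_update_same.mpr hu0
  -- deriv U p = 1
  have hPc : ContinuousAt P p := (hP.differentiableAt (ball_mem_nhds p hR)).continuousAt
  have hderiv1 : Tendsto (deriv U) (𝓝[≠] p) (𝓝 1) := by
    have hcong : ∀ᶠ z in 𝓝[≠] p, (1 - P z * (t z)⁻¹ ^ 2) = deriv U z := by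
      filter_upwards [mem_nhdsWithin_of_mem_nhds hmem, self_mem_nhdsWithin] with z hz1 hz2
      rw [(hUder z ⟨hz1, hz2⟩).deriv]
      have ht0 : t z ≠ 0 := htne z ⟨hz1, hz2⟩
      field_simp
      ring
    have : Tendsto (fun z => 1 - P z * (t z)⁻¹ ^ 2) (𝓝[≠] p) (𝓝 (1 - P p * 0 ^ 2)) :=
      tendsto_const_nhds.sub ((hPc.tendsto.mono_left nhdsWithin_le_nhds).mul (hu0.pow 2))
    have h2 : Tendsto (fun z => 1 - P z * (t z)⁻¹ ^ 2) (𝓝[≠] p) (𝓝 1) := by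
      simpa using this
    exact h2.congr' hcong
  have hanal : AnalyticOnNhd ℂ U (ball p r) := hU.analyticOnNhd isOpen_ball
  have hdc : ContinuousAt (deriv U) p := (hanal.deriv p (mem_ball_self hr)).continuousAt
  have hderivUp : deriv U p = 1 :=
    tendsto_nhds_unique (hdc.tendsto.mono_left nhdsWithin_le_nhds) hderiv1
  -- v = dslope U p, with v p = 1
  set v : ℂ → ℂ := dslope U p with hv_def
  have hv : DifferentiableOn ℂ v (ball p r) := (differentiableOn_dslope hmem).mpr hU
  have hvp : v p = 1 := by rw [hv_def, dslope_same]; exact hderivUp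
  set w : ℂ → ℂ := dslope v p with hw_def
  have hw : DifferentiableOn ℂ w (ball p r) := (differentiableOn_dslope hmem).mpr hv
  have hvne : ∀ᶠ z in 𝓝 p, v z ≠ 0 :=
    (hv.differentiableAt hmem).continuousAt.eventually_ne (by rw [hvp]; norm_num)
  -- the holomorphic candidate near p
  set h : ℂ → ℂ := fun z => -(w z) / v z with hh_def
  have hhd : DifferentiableAt ℂ h p :=
    ((hw.differentiableAt hmem).neg).div (hv.differentiableAt hmem) (by rw [hvp]; norm_num)
  -- global g
  set g : ℂ → ℂ := Function.update (fun z => t z - 1 / (z - p)) p (h p) with hg_def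
  have hgeq : ∀ z, z ≠ p → g z = t z - 1 / (z - p) := fun z hz =>
    Function.update_of_ne hz _ _
  have heq : g =ᶠ[𝓝 p] h := by
    filter_upwards [hvne, hmem] with z hzv hzball
    by_cases hzp : z = p
    · subst hzp; simp [hg_def]
    · rw [hgeq z hzp]
      have hd : z - p ≠ 0 := sub_ne_zero.mpr hzp
      have ht0 : t z ≠ 0 := htne z ⟨hzball, hzp⟩
      have hUz : U z = (t z)⁻¹ := hUeq z hzp
      have hvz : v z = (t z)⁻¹ / (z - p) := by
        rw [hv_def, dslope_of_ne _ hzp, slope_def_field, hUp, hUz, sub_zero]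
      have hwz : w z = (v z - 1) / (z - p) := by
        rw [hw_def, dslope_of_ne _ hzp, slope_def_field, hvp]
      rw [hh_def]
      simp only [hwz, hvz]
      field_simp
      ring
  have hgp : DifferentiableAt ℂ g p := hhd.congr_of_eventuallyEq heq
  refine ⟨g, ?_, ?_⟩
  · intro z hz
    by_cases hzp : z = p
    · subst hzp; exact hgp.differentiableWithinAt
    · have hdiff : DifferentiableAt ℂ (fun w => t w - 1 / (w - p)) z := by
        have h1 : DifferentiableAt ℂ t z :=
          ht.differentiableAt ((isOpen_ball.sdiff isClosed_singleton).mem_nhds ⟨hz, hzp⟩)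
        exact h1.sub ((differentiableAt_const _).div
          ((differentiableAt_id).sub_const p) (sub_ne_zero.mpr hzp))
      have : DifferentiableAt ℂ g z := by
        apply hdiff.congr_of_eventuallyEq
        filter_upwards [isOpen_ne.mem_nhds hzp] with y hy
        exact hgeq y hy
      exact this.differentiableWithinAt
  · intro z hz
    rw [hgeq z hz.2]
    ring
end

section
/- Let U ⊆ ℂ be open and let t : U → ℂ be a holomorphic solution of the Riccati equation t′ = z − t² with t(z) ≠ z for all z ∈ U. Then the function w(z) := t(z)²/(t(z) − z) satisfies the first-order algebraic differential equation z²·w′² + ((2z − 4z²)·w − (1 − z)·w²)·w′ + (4z³·w + (1 − z² + 8z³)·w² + (4z − 6z² + 4z³)·w³ − (1 − z + z²)·w⁴) = 0 on U. -/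
set_option maxHeartbeats 1000000

open Complex

/-- The transformed function `w = t²/(t − z)` of Example 7. -/
noncomputable def riccatiTransform (t : ℂ → ℂ) : ℂ → ℂ :=
  fun z => (t z) ^ 2 / (t z - z)

/-- If `t` solves `t′ = z − t²` on an open set `U` with `t(z) ≠ z` on `U`,
then `w = t²/(t − z)` solves
`z²·w′² + ((2z − 4z²)·w − (1 − z)·w²)·w′ + (4z³·w + (1 − z² + 8z³)·w²
  + (4z − 6z² + 4z³)·w³ − (1 − z + z²)·w⁴) = 0` on `U`. -/
theorem riccati_transform_satisfies_degree_two_ode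
    (U : Set ℂ) (hU : IsOpen U)
    (t : ℂ → ℂ)
    (hode : ∀ z ∈ U, HasDerivAt t (z - (t z) ^ 2) z)
    (hne : ∀ z ∈ U, t z ≠ z) :
    ∀ z ∈ U,
      z ^ 2 * (deriv (riccatiTransform t) z) ^ 2
        + ((2 * z - 4 * z ^ 2) * riccatiTransform t z
            - (1 - z) * (riccatiTransform t z) ^ 2) * deriv (riccatiTransform t) z
        + (4 * z ^ 3 * riccatiTransform t z
            + (1 - z ^ 2 + 8 * z ^ 3) * (riccatiTransform t z) ^ 2
            + (4 * z - 6 * z ^ 2 + 4 * z ^ 3) * (riccatiTransform t z) ^ 3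
            - (1 - z + z ^ 2) * (riccatiTransform t z) ^ 4) = 0 := by
  intro z hz
  have hsub : t z - z ≠ 0 := sub_ne_zero.mpr (hne z hz)
  have ht : HasDerivAt t (z - (t z) ^ 2) z := hode z hz
  have hnum : HasDerivAt (fun z => (t z) ^ 2) (2 * t z * (z - (t z) ^ 2)) z := by
    simpa [mul_comm] using ht.fun_pow 2
  have hden : HasDerivAt (fun z => t z - z) ((z - (t z) ^ 2) - 1) z :=
    ht.sub (hasDerivAt_id z)
  have hw : HasDerivAt (riccatiTransform t)
      ((2 * t z * (z - (t z) ^ 2) * (t z - z) - (t z) ^ 2 * ((z - (t z) ^ 2) - 1)) /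
        (t z - z) ^ 2) z := hnum.div hden hsub
  have hderiv := hw.deriv
  have e1 : riccatiTransform t z = t z ^ 2 / (t z - z) := rfl
  rw [hderiv, e1]
  generalize t z = a at hsub ⊢
  obtain ⟨d, rfl⟩ : ∃ d, a = z + d := ⟨a - z, by ring⟩
  rw [show z + d - z = d from by ring] at hsub ⊢
  field_simp
  ring
end

section
/- Let f be a meromorphic function on ℂ satisfying f′(z) = 1 − f(z)² at every point z that is not a pole of f. Then either f is identically 1, or f is identically −1, or there exists ζ₀ ∈ ℂ such that f(z) = coth(z − ζ₀) = cosh(z − ζ₀)/sinh(z − ζ₀) at every non-pole point z. -/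
open Complex Filter Metric Set Topology

private lemma riccati_lipschitz (R : ℝ) :
    LipschitzOnWith (2 * R.toNNReal) (fun y : ℂ => 1 - y ^ 2) (Metric.closedBall 0 R) := by
  rw [lipschitzOnWith_iff_dist_le_mul]
  intro x hx y hy
  simp only [Metric.mem_closedBall, dist_zero_right] at hx hy
  rw [dist_eq_norm, dist_eq_norm]
  have h0 : (1 - x ^ 2) - (1 - y ^ 2) = -((x + y) * (x - y)) := by ring
  rw [h0, norm_neg, norm_mul]
  have hRR : R ≤ (R.toNNReal : ℝ) := Real.le_coe_toNNReal R
  have h1 : ‖x + y‖ ≤ ((2 * R.toNNReal : NNReal) : ℝ) := by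
    push_cast
    calc ‖x + y‖ ≤ ‖x‖ + ‖y‖ := norm_add_le _ _
    _ ≤ R + R := add_le_add hx hy
    _ ≤ 2 * (R.toNNReal : ℝ) := by linarith
  exact mul_le_mul_of_nonneg_right h1 (norm_nonneg _)

private lemma riccati_local_uniq {f g : ℂ → ℂ} {z₀ : ℂ}
    (hfd : ∀ᶠ z in 𝓝 z₀, HasDerivAt f (1 - f z ^ 2) z)
    (hgd : ∀ᶠ z in 𝓝 z₀, HasDerivAt g (1 - g z ^ 2) z)
    (hfa : AnalyticAt ℂ f z₀) (hga : AnalyticAt ℂ g z₀)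
    (heq : f z₀ = g z₀) : f =ᶠ[𝓝 z₀] g := by
  set R : ℝ := ‖f z₀‖ + 1 with hR
  have hball : Metric.closedBall (0 : ℂ) R ∈ 𝓝 (f z₀) :=
    closedBall_mem_nhds_of_mem (by simp [hR])
  have hfball : ∀ᶠ z in 𝓝 z₀, f z ∈ Metric.closedBall (0 : ℂ) R :=
    hfa.continuousAt.eventually_mem hball
  have hgball : ∀ᶠ z in 𝓝 z₀, g z ∈ Metric.closedBall (0 : ℂ) R :=
    hga.continuousAt.eventually_mem (heq ▸ hball)
  have hψc : Continuous fun t : ℝ => z₀ + (t : ℂ) :=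
    continuous_const.add Complex.continuous_ofReal
  have hψ : Tendsto (fun t : ℝ => z₀ + (t : ℂ)) (𝓝 0) (𝓝 z₀) := by
    simpa using hψc.tendsto 0
  have hev : ∀ᶠ t : ℝ in 𝓝 0,
      (HasDerivAt f (1 - f (z₀ + (t : ℂ)) ^ 2) (z₀ + (t : ℂ)) ∧
        f (z₀ + (t : ℂ)) ∈ Metric.closedBall (0 : ℂ) R) ∧
      (HasDerivAt g (1 - g (z₀ + (t : ℂ)) ^ 2) (z₀ + (t : ℂ)) ∧
        g (z₀ + (t : ℂ)) ∈ Metric.closedBall (0 : ℂ) R) :=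
    hψ.eventually ((hfd.and hfball).and (hgd.and hgball))
  have key : (fun t : ℝ => f (z₀ + (t : ℂ))) =ᶠ[𝓝 0] fun t : ℝ => g (z₀ + (t : ℂ)) := by
    apply ODE_solution_unique_of_eventually (v := fun _ (y : ℂ) => 1 - y ^ 2)
      (s := fun _ => Metric.closedBall (0 : ℂ) R) (K := 2 * R.toNNReal)
      (Eventually.of_forall fun _ => riccati_lipschitz R)
    · filter_upwards [hev] with t ht
      refine ⟨?_, ht.1.2⟩
      have h1 : HasDerivAt (fun w : ℂ => f (z₀ + w)) (1 - f (z₀ + (t : ℂ)) ^ 2) (t : ℂ) := by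
        simpa [Function.comp_def] using ht.1.1.comp (t : ℂ) ((hasDerivAt_id ((t : ℂ))).const_add z₀)
      exact h1.comp_ofReal
    · filter_upwards [hev] with t ht
      refine ⟨?_, ht.2.2⟩
      have h1 : HasDerivAt (fun w : ℂ => g (z₀ + w)) (1 - g (z₀ + (t : ℂ)) ^ 2) (t : ℂ) := by
        simpa [Function.comp_def] using ht.2.1.comp (t : ℂ) ((hasDerivAt_id ((t : ℂ))).const_add z₀)
      exact h1.comp_ofReal
    · simpa using heq
  have hne : Tendsto (fun t : ℝ => z₀ + (t : ℂ)) (𝓝[≠] 0) (𝓝[≠] z₀) := by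
    apply tendsto_nhdsWithin_of_tendsto_nhds_of_eventually_within
    · exact hψ.mono_left nhdsWithin_le_nhds
    · filter_upwards [eventually_mem_nhdsWithin] with t ht
      simp only [Set.mem_compl_iff, Set.mem_singleton_iff] at ht ⊢
      simpa [Complex.ofReal_eq_zero] using ht
  have hfreq : ∃ᶠ z in 𝓝[≠] z₀, f z = g z :=
    hne.frequently ((key.filter_mono nhdsWithin_le_nhds).frequently)
  exact (hfa.frequently_eq_iff_eventually_eq hga).mp hfreq

private lemma riccati_merom_eq {f g : ℂ → ℂ}
    (hf : MeromorphicOn f Set.univ) (hg : MeromorphicOn g Set.univ)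
    {z₀ : ℂ} (heq : f =ᶠ[𝓝 z₀] g) :
    ∀ z : ℂ, AnalyticAt ℂ f z → AnalyticAt ℂ g z → f z = g z := by
  set h : ℂ → ℂ := fun z => f z - g z with hh
  set S : Set ℂ := {z | ¬ AnalyticAt ℂ h z} with hS
  have hSd : ∀ x : ℂ, Disjoint (𝓝[≠] x) (𝓟 S) := by
    intro x
    have hm : MeromorphicAt h x := (hf x trivial).sub (hg x trivial)
    rw [disjoint_principal_right]
    filter_upwards [hm.eventually_analyticAt] with y hy
    simpa [hS] using hy
  have hSc : S.Countable := by
    obtain ⟨-, h2⟩ := isClosed_and_discrete_iff.mpr hSd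
    haveI := isDiscrete_iff_discreteTopology.mp h2
    exact Set.countable_coe_iff.mp (TopologicalSpace.separableSpace_iff_countable.mp inferInstance)
  have hconn : IsPreconnected Sᶜ :=
    (hSc.isConnected_compl_of_one_lt_rank
      (by rw [rank_real_complex]; norm_num)).isPreconnected
  have hAn : AnalyticOnNhd ℂ h Sᶜ := fun z hz => not_not.mp hz
  have heq0 : h =ᶠ[𝓝 z₀] (fun _ => (0 : ℂ)) := by
    filter_upwards [heq] with w hw
    simp [hh, hw]
  have hz₀S : z₀ ∈ Sᶜ := by
    simp only [hS, Set.mem_compl_iff, Set.mem_setOf_eq, not_not]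
    exact analyticAt_const.congr heq0.symm
  have hzero : Set.EqOn h 0 Sᶜ :=
    hAn.eqOn_zero_of_preconnected_of_eventuallyEq_zero hconn hz₀S heq0
  intro z hfz hgz
  have hzS : z ∈ Sᶜ := not_not.mpr (hfz.sub hgz)
  have := hzero hzS
  simpa [hh, sub_eq_zero] using this

/-- **Classification of meromorphic solutions of `f′ = 1 − f²`.**
Every meromorphic function on `ℂ` satisfying `f′ = 1 − f²` at each non-pole
point is identically `1`, identically `−1`, or a translate
`f(z) = coth(z − ζ₀) = cosh(z − ζ₀)/sinh(z − ζ₀)` of the hyperbolic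
cotangent. -/
theorem meromorphic_solutions_of_autonomous_riccati
    (f : ℂ → ℂ) (hf : MeromorphicOn f Set.univ)
    (hode : ∀ z : ℂ, AnalyticAt ℂ f z → HasDerivAt f (1 - (f z) ^ 2) z) :
    (∀ z : ℂ, AnalyticAt ℂ f z → f z = 1) ∨
    (∀ z : ℂ, AnalyticAt ℂ f z → f z = -1) ∨
    (∃ ζ₀ : ℂ, ∀ z : ℂ, AnalyticAt ℂ f z →
      f z = Complex.cosh (z - ζ₀) / Complex.sinh (z - ζ₀)) := by
  obtain ⟨z₀, hz₀⟩ : ∃ z, AnalyticAt ℂ f z := ((hf 0 trivial).eventually_analyticAt).exists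
  have hfd : ∀ᶠ z in 𝓝 z₀, HasDerivAt f (1 - f z ^ 2) z := by
    filter_upwards [hz₀.eventually_analyticAt] with w hw using hode w hw
  by_cases h1 : f z₀ = 1
  · left
    intro z hz
    have heqv : f =ᶠ[𝓝 z₀] (fun _ => (1 : ℂ)) := by
      refine riccati_local_uniq hfd ?_ hz₀ analyticAt_const (by simpa using h1)
      filter_upwards with w
      refine (hasDerivAt_const w (1 : ℂ)).congr_deriv ?_
      norm_num
    exact riccati_merom_eq hf (MeromorphicOn.const 1) heqv z hz analyticAt_const
  by_cases h2 : f z₀ = -1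
  · right; left
    intro z hz
    have heqv : f =ᶠ[𝓝 z₀] (fun _ => (-1 : ℂ)) := by
      refine riccati_local_uniq hfd ?_ hz₀ analyticAt_const (by simpa using h2)
      filter_upwards with w
      refine (hasDerivAt_const w (-1 : ℂ)).congr_deriv ?_
      norm_num
    exact riccati_merom_eq hf (MeromorphicOn.const (-1)) heqv z hz analyticAt_const
  · right; right
    set c : ℂ := f z₀ with hc
    have hc1 : c - 1 ≠ 0 := sub_ne_zero.mpr h1
    have hc2 : c + 1 ≠ 0 := by
      intro hctr
      exact h2 (by linear_combination hctr)
    set a : ℂ := (c + 1) / (c - 1) with ha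
    have ha0 : a ≠ 0 := div_ne_zero hc2 hc1
    have ha1 : a ≠ 1 := by
      intro hctr
      rw [ha, div_eq_one_iff_eq hc1] at hctr
      have : (1 : ℂ) = -1 := by linear_combination hctr
      norm_num at this
    set ζ₀ : ℂ := z₀ - Complex.log a / 2 with hζ
    refine ⟨ζ₀, ?_⟩
    set g : ℂ → ℂ := fun z => Complex.cosh (z - ζ₀) / Complex.sinh (z - ζ₀) with hg
    set u : ℂ := z₀ - ζ₀ with hu
    set E : ℂ := Complex.exp u with hE
    have hE0 : E ≠ 0 := Complex.exp_ne_zero u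
    have hEa : E * E = a := by
      rw [hE, ← Complex.exp_add]
      have huu : u + u = Complex.log a := by rw [hu, hζ]; ring
      rw [huu, Complex.exp_log ha0]
    have hEE : E * E * (c - 1) = c + 1 := by rw [hEa, ha, div_mul_cancel₀ _ hc1]
    have h2s : 2 * Complex.sinh u = E - E⁻¹ := by
      rw [Complex.two_sinh, Complex.exp_neg]
    have h2c : 2 * Complex.cosh u = E + E⁻¹ := by
      rw [Complex.two_cosh, Complex.exp_neg]
    have hsv : Complex.sinh u = (E - E⁻¹) / 2 := by linear_combination (1/2 : ℂ) * h2s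
    have hcv : Complex.cosh u = (E + E⁻¹) / 2 := by linear_combination (1/2 : ℂ) * h2c
    have hsne : Complex.sinh u ≠ 0 := by
      intro h
      have h2 : E - E⁻¹ = 0 := by rw [← h2s, h, mul_zero]
      have hEe : E = E⁻¹ := sub_eq_zero.mp h2
      apply ha1
      rw [← hEa]
      nth_rewrite 2 [hEe]
      exact mul_inv_cancel₀ hE0
    have hsne' : E - E⁻¹ ≠ 0 := by
      intro h
      exact hsne (by rw [hsv, h, zero_div])
    -- value of g at z₀
    have hgz₀ : g z₀ = c := by
      have hgu : g z₀ = Complex.cosh u / Complex.sinh u := by rw [hg, hu]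
      rw [hgu, hcv, hsv, div_div_div_comm]
      norm_num
      rw [div_eq_iff hsne']
      have hEi : E * E⁻¹ = 1 := mul_inv_cancel₀ hE0
      linear_combination (c - 1) * E * hEi - E⁻¹ * hEE
    -- analyticity of g away from poles
    have hA : ∀ z : ℂ, Complex.sinh (z - ζ₀) ≠ 0 → AnalyticAt ℂ g z := by
      intro z hz
      have hco : AnalyticAt ℂ (fun z : ℂ => Complex.cosh (z - ζ₀)) z :=
        ((Complex.differentiable_cosh.comp (differentiable_id.sub_const ζ₀)).analyticAt z)
      have hsi : AnalyticAt ℂ (fun z : ℂ => Complex.sinh (z - ζ₀)) z :=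
        ((Complex.differentiable_sinh.comp (differentiable_id.sub_const ζ₀)).analyticAt z)
      exact hco.div hsi hz
    -- derivative of g
    have hgd : ∀ z : ℂ, Complex.sinh (z - ζ₀) ≠ 0 → HasDerivAt g (1 - g z ^ 2) z := by
      intro z hz
      have hco : HasDerivAt (fun z : ℂ => Complex.cosh (z - ζ₀)) (Complex.sinh (z - ζ₀)) z := by
        simpa [Function.comp_def] using (Complex.hasDerivAt_cosh (z - ζ₀)).comp z ((hasDerivAt_id z).sub_const ζ₀)
      have hsi : HasDerivAt (fun z : ℂ => Complex.sinh (z - ζ₀)) (Complex.cosh (z - ζ₀)) z := by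
        simpa [Function.comp_def] using (Complex.hasDerivAt_sinh (z - ζ₀)).comp z ((hasDerivAt_id z).sub_const ζ₀)
      have := hco.div hsi hz
      refine this.congr_deriv ?_
      symm
      have hS2 : Complex.sinh (z - ζ₀) ^ 2 ≠ 0 := pow_ne_zero _ hz
      simp only [hg]
      rw [div_pow, eq_div_iff hS2, sub_mul, div_mul_cancel₀ _ hS2, one_mul]
      ring
    -- g meromorphic
    have hgm : MeromorphicOn g Set.univ := by
      intro z _
      have hco : AnalyticAt ℂ (fun z : ℂ => Complex.cosh (z - ζ₀)) z :=
        ((Complex.differentiable_cosh.comp (differentiable_id.sub_const ζ₀)).analyticAt z)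
      have hsi : AnalyticAt ℂ (fun z : ℂ => Complex.sinh (z - ζ₀)) z :=
        ((Complex.differentiable_sinh.comp (differentiable_id.sub_const ζ₀)).analyticAt z)
      exact hco.meromorphicAt.div hsi.meromorphicAt
    -- sinh is continuous in z
    have hsc : Continuous fun z : ℂ => Complex.sinh (z - ζ₀) :=
      Complex.continuous_sinh.comp (continuous_id.sub continuous_const)
    have hsz₀ : Complex.sinh (z₀ - ζ₀) ≠ 0 := by rw [← hu]; exact hsne
    -- local uniqueness at z₀
    have hgdd : ∀ᶠ z in 𝓝 z₀, HasDerivAt g (1 - g z ^ 2) z := by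
      filter_upwards [hsc.continuousAt.eventually_ne hsz₀] with w hw using hgd w hw
    have heqv : f =ᶠ[𝓝 z₀] g :=
      riccati_local_uniq hfd hgdd hz₀ (hA z₀ hsz₀) (by rw [hgz₀])
    have hfg : ∀ z : ℂ, AnalyticAt ℂ f z → AnalyticAt ℂ g z → f z = g z :=
      riccati_merom_eq hf hgm heqv
    intro z hz
    by_cases hsz : Complex.sinh (z - ζ₀) = 0
    · exfalso
      -- sinh has isolated zeros
      have hsa : AnalyticAt ℂ (fun z : ℂ => Complex.sinh (z - ζ₀)) z :=
        ((Complex.differentiable_sinh.comp (differentiable_id.sub_const ζ₀)).analyticAt z)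
      have hsinh_ev : ∀ᶠ w in 𝓝[≠] z, Complex.sinh (w - ζ₀) ≠ 0 := by
        rcases hsa.eventually_eq_zero_or_eventually_ne_zero with hcase | hcase
        · exfalso
          have hev : (fun w : ℂ => Complex.sinh (w - ζ₀)) =ᶠ[𝓝 z] (fun _ => (0 : ℂ)) := hcase
          have hder : HasDerivAt (fun w : ℂ => Complex.sinh (w - ζ₀))
              (Complex.cosh (z - ζ₀)) z := by
            simpa [Function.comp_def] using (Complex.hasDerivAt_sinh (z - ζ₀)).comp z ((hasDerivAt_id z).sub_const ζ₀)
          have h0 : Complex.cosh (z - ζ₀) = 0 := by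
            have := hev.deriv_eq
            rw [hder.deriv] at this
            simpa using this
          have hid : Complex.cosh (z - ζ₀) ^ 2 - Complex.sinh (z - ζ₀) ^ 2 = 1 :=
            Complex.cosh_sq_sub_sinh_sq _
          rw [h0, hsz] at hid
          norm_num at hid
        · exact hcase
      -- f = g on a punctured neighborhood of z
      have hfg_ev : ∀ᶠ w in 𝓝[≠] z, f w = g w := by
        filter_upwards [hsinh_ev,
          (hz.eventually_analyticAt).filter_mono nhdsWithin_le_nhds] with w hw1 hw2
        exact hfg w hw2 (hA w hw1)
      -- ‖g‖ → ∞ near z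
      have hc0 : Complex.cosh (z - ζ₀) ≠ 0 := by
        intro hctr
        have hid : Complex.cosh (z - ζ₀) ^ 2 - Complex.sinh (z - ζ₀) ^ 2 = 1 :=
          Complex.cosh_sq_sub_sinh_sq _
        rw [hctr, hsz] at hid
        norm_num at hid
      have hnum : Tendsto (fun w : ℂ => ‖Complex.cosh (w - ζ₀)‖) (𝓝[≠] z)
          (𝓝 ‖Complex.cosh (z - ζ₀)‖) :=
        ((Complex.continuous_cosh.comp (continuous_id.sub continuous_const)).norm.tendsto z).mono_left
          nhdsWithin_le_nhds
      have hden : Tendsto (fun w : ℂ => ‖Complex.sinh (w - ζ₀)‖) (𝓝[≠] z) (𝓝[>] 0) := by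
        apply tendsto_nhdsWithin_of_tendsto_nhds_of_eventually_within
        · have := (hsc.norm.tendsto z).mono_left (nhdsWithin_le_nhds (s := {z}ᶜ))
          simpa [hsz] using this
        · filter_upwards [hsinh_ev] with w hw
          simpa using norm_pos_iff.mpr hw
      have hinv : Tendsto (fun w : ℂ => ‖Complex.sinh (w - ζ₀)‖⁻¹) (𝓝[≠] z) atTop :=
        tendsto_inv_nhdsGT_zero.comp hden
      have hgnorm : Tendsto (fun w : ℂ => ‖g w‖) (𝓝[≠] z) atTop := by
        have := Tendsto.pos_mul_atTop (norm_pos_iff.mpr hc0) hnum hinv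
        apply this.congr
        intro w
        rw [hg]
        simp [norm_div, div_eq_mul_inv]
      have hfnorm : Tendsto (fun w : ℂ => ‖f w‖) (𝓝[≠] z) atTop := by
        apply hgnorm.congr'
        filter_upwards [hfg_ev] with w hw
        rw [hw]
      have hflim : Tendsto (fun w : ℂ => ‖f w‖) (𝓝[≠] z) (𝓝 ‖f z‖) :=
        ((hz.continuousAt.norm).tendsto).mono_left nhdsWithin_le_nhds
      exact not_tendsto_atTop_of_tendsto_nhds hflim hfnorm
    · exact hfg z hz (hA z hsz)
end
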